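/- Let ε > 0 and 0 < ε₁ < ε. Let ν₁ and ν₂ be f-invariant Borel probability measures with ν₁(Λ) = ν₂(Λ) = 1, each almost expansive on Λ at scale ε (i.e. ν₁(NE(ε;Λ)) = 0 and ν₂(NE(ε;Λ)) = 0), and mutually singular. Then for every β > 0 and every M > 0 there exist compact sets Q_t ⊂ Λ defined for all sufficiently large t, satisfying ν₁(Q_t) ≥ 1 − β and ν₂(Q_t) = 0, such that for all integers i, j with 0 ≤ i, j ≤ M: limsup_{t→∞} ν₂( ⋃_{y∈Q_t} f_{−i}( B_{t−(i+j)}( f_i(y), ε₁ ) ) ) ≤ β. -/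

import Mathlib

open Set Filter MeasureTheory Topology

namespace CTFlow

variable {X : Type*}

/-- A continuous flow on `X`. -/
def IsFlow [TopologicalSpace X] (f : ℝ → X → X) : Prop :=
  Continuous (fun p : ℝ × X => f p.1 p.2) ∧ (∀ x, f 0 x = x) ∧
    ∀ s t : ℝ, ∀ x, f (s + t) x = f s (f t x)

variable [MetricSpace X]

/-- The Bowen metric `d_t(x,y) = sup_{s ∈ [0,t]} d(f_s x, f_s y)`. -/
noncomputable def bowenDist (f : ℝ → X → X) (t : ℝ) (x y : X) : ℝ :=
  ⨆ s : Icc (0:ℝ) t, dist (f (s : ℝ) x) (f (s : ℝ) y)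

/-- The Bowen ball `B_t(x,ε)`. -/
def bowenBall (f : ℝ → X → X) (t ε : ℝ) (x : X) : Set X :=
  {y | bowenDist f t x y < ε}

/-- Birkhoff integral `Φ_0(x,t) = ∫_0^t φ(f_s x) ds`. -/
noncomputable def birk (f : ℝ → X → X) (φ : X → ℝ) (x : X) (t : ℝ) : ℝ :=
  ∫ s in (0:ℝ)..t, φ (f s x)

/-- `Φ_ε(x,t) = sup_{y ∈ B_t(x,ε)} ∫_0^t φ(f_s y) ds`, with `Φ_0` the Birkhoff integral. -/
noncomputable def PhiSup (f : ℝ → X → X) (φ : X → ℝ) (ε : ℝ) (x : X) (t : ℝ) : ℝ :=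
  if ε = 0 then birk f φ x t
  else sSup ((fun y => birk f φ y t) '' bowenBall f t ε x)

/-- `(C)_t = {x : (x,t) ∈ C}`. -/
def segsAt (C : Set (X × ℝ)) (t : ℝ) : Set X := {x | (x, t) ∈ C}

/-- `E` is a `(t,δ)`-separated subset of `(C)_t`. -/
def IsSepSet (f : ℝ → X → X) (C : Set (X × ℝ)) (t δ : ℝ) (E : Finset X) : Prop :=
  (E : Set X) ⊆ segsAt C t ∧ ∀ x ∈ E, ∀ y ∈ E, x ≠ y → δ < bowenDist f t x y

/-- The two-scale partition function `λ(C,φ,δ,ε,t)`. -/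
noncomputable def partFn (f : ℝ → X → X) (φ : X → ℝ) (C : Set (X × ℝ)) (δ ε t : ℝ) : ℝ :=
  sSup {r : ℝ | ∃ E : Finset X, IsSepSet f C t δ E ∧
    r = ∑ x ∈ E, Real.exp (PhiSup f φ ε x t)}

/-- Pressure at scales `δ, ε`:  `P(C,φ,δ,ε) = limsup_{t→∞} (1/t) log λ(C,φ,δ,ε,t)`. -/
noncomputable def pres (f : ℝ → X → X) (φ : X → ℝ) (C : Set (X × ℝ)) (δ ε : ℝ) : ℝ :=
  Filter.limsup (fun t : ℝ => Real.log (partFn f φ C δ ε t) / t) Filter.atTop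

/-- `P(C,φ) = lim_{δ→0} P(C,φ,δ)` (rendered as a limsup as `δ → 0⁺`). -/
noncomputable def presFull (f : ℝ → X → X) (φ : X → ℝ) (C : Set (X × ℝ)) : ℝ :=
  Filter.limsup (fun δ : ℝ => pres f φ C δ 0) (nhdsWithin (0:ℝ) (Ioi 0))

/-- The collection `Λ × ℝ⁺` of orbit segments starting in `Λ`. -/
def lamSegs (Λ : Set X) : Set (X × ℝ) := Λ ×ˢ Ici (0:ℝ)

/-- Topological pressure `P(φ;Λ) = P(Λ×ℝ⁺, φ)`. -/
noncomputable def topPres (f : ℝ → X → X) (φ : X → ℝ) (Λ : Set X) : ℝ :=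
  presFull f φ (lamSegs Λ)

/-- `O(V)`: finite orbit segments entirely contained in `V`. -/
def orbSegs (f : ℝ → X → X) (V : Set X) : Set (X × ℝ) :=
  {q | 0 ≤ q.2 ∧ ∀ s ∈ Ico (0:ℝ) q.2, f s q.1 ∈ V}

/-- `[C] = {(x,n) ∈ M×ℕ : (f_{−s} x, n+s+t) ∈ C for some s,t ∈ [0,1)}`. -/
def bracket (f : ℝ → X → X) (C : Set (X × ℝ)) : Set (X × ℝ) :=
  {q | ∃ n : ℕ, q.2 = (n : ℝ) ∧
    ∃ s ∈ Ico (0:ℝ) 1, ∃ t ∈ Ico (0:ℝ) 1, (f (-s) q.1, (n : ℝ) + s + t) ∈ C}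

/-- `f_{i,j}(C) = {(f_i x, t−(i+j)) : (x,t) ∈ C, t ≥ i+j}`. -/
def fShift (f : ℝ → X → X) (i j : ℝ) (C : Set (X × ℝ)) : Set (X × ℝ) :=
  {q | ∃ x t, (x, t) ∈ C ∧ i + j ≤ t ∧ q = (f i x, t - (i + j))}

/-- Tail (W)-specification at scale `δ` with gluing-time bound `τ` and minimal length `T₀`,
with shadowing orbits contained in the collection `OV`. -/
def HasSpecAt (f : ℝ → X → X) (C OV : Set (X × ℝ)) (δ τ T₀ : ℝ) : Prop :=
  ∀ (k : ℕ) (x : ℕ → X) (t : ℕ → ℝ), 0 < k →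
    (∀ i < k, (x i, t i) ∈ C) → (∀ i < k, T₀ ≤ t i) →
    ∃ (y : X) (g : ℕ → ℝ), (∀ i, g i ∈ Icc (0:ℝ) τ) ∧
      (∀ j < k, bowenDist f (t j)
        (f ((∑ i ∈ Finset.range j, t i) + ∑ i ∈ Finset.range j, g i) y) (x j) < δ) ∧
      (y, (∑ i ∈ Finset.range k, t i) + ∑ i ∈ Finset.range (k - 1), g i) ∈ OV

/-- Tail (W)-specification at scale `δ` (for some `τ > 0`, `T₀ > 0`). -/
def HasTailSpec (f : ℝ → X → X) (C OV : Set (X × ℝ)) (δ : ℝ) : Prop :=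
  ∃ τ > 0, ∃ T₀ > 0, HasSpecAt f C OV δ τ T₀

/-- The Bowen property of `φ` on a collection `C` at scale `ε`. -/
def HasBowen (f : ℝ → X → X) (φ : X → ℝ) (C : Set (X × ℝ)) (ε : ℝ) : Prop :=
  ∃ K > 0, ∀ q ∈ C, ∀ y ∈ bowenBall f q.2 ε q.1,
    |birk f φ q.1 q.2 - birk f φ y q.2| ≤ K

/-- A decomposition `(P,G,S)` of a collection `D` of orbit segments. -/
structure Decomp (f : ℝ → X → X) (D P G S : Set (X × ℝ)) where
  p : X × ℝ → ℝ
  g : X × ℝ → ℝ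
  s : X × ℝ → ℝ
  p_nonneg : ∀ q ∈ D, 0 ≤ p q
  g_nonneg : ∀ q ∈ D, 0 ≤ g q
  s_nonneg : ∀ q ∈ D, 0 ≤ s q
  sum_eq : ∀ q ∈ D, p q + g q + s q = q.2
  mem_P : ∀ q ∈ D, (q.1, p q) ∈ P
  mem_G : ∀ q ∈ D, (f (p q) q.1, g q) ∈ G
  mem_S : ∀ q ∈ D, (f (p q + g q) q.1, s q) ∈ S

/-- `G^M = {(x,t) ∈ D : p(x,t) ≤ M and s(x,t) ≤ M}`. -/
def Decomp.GM {f : ℝ → X → X} {D P G S : Set (X × ℝ)} (dec : Decomp f D P G S)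
    (M : ℝ) : Set (X × ℝ) :=
  {q ∈ D | dec.p q ≤ M ∧ dec.s q ≤ M}

/-- The two-sided infinite Bowen ball `Γ_ε(x)`. -/
def GammaSet (f : ℝ → X → X) (ε : ℝ) (x : X) : Set X :=
  {y | ∀ t : ℝ, dist (f t x) (f t y) ≤ ε}

/-- The set of non-expansive points at scale `ε` in `Λ`. -/
def NE (f : ℝ → X → X) (ε : ℝ) (Λ : Set X) : Set X :=
  {x ∈ Λ | ∀ s > 0, ¬ GammaSet f ε x ⊆ (fun r : ℝ => f r x) '' Icc (-s) s}

/-- The flow is almost expansive on `Λ` at scale `ε`. -/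
def AlmostExpansive [MeasurableSpace X] (f : ℝ → X → X) (Λ : Set X) (ε : ℝ) : Prop :=
  ∀ μ : Measure X, IsProbabilityMeasure μ → (∀ t : ℝ, Measure.map (f t) μ = μ) →
    μ Λ = 1 → μ (NE f ε Λ) = 0

/-- `ν_t`: normalized weighted sum of Dirac measures on a separated set. -/
noncomputable def nuT [MeasurableSpace X] (f : ℝ → X → X) (φ : X → ℝ) (E : Finset X)
    (t : ℝ) : Measure X :=
  (ENNReal.ofReal (∑ x ∈ E, Real.exp (birk f φ x t)))⁻¹ •
    ∑ x ∈ E, ENNReal.ofReal (Real.exp (birk f φ x t)) • Measure.dirac x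

/-- `μ_t = (1/t) ∫_0^t (f_s)_* ν_t ds`. -/
noncomputable def muT [MeasurableSpace X] (f : ℝ → X → X) (φ : X → ℝ) (E : Finset X)
    (t : ℝ) : Measure X :=
  Measure.bind ((ENNReal.ofReal t)⁻¹ • volume.restrict (Ioc (0:ℝ) t))
    (fun s => Measure.map (f s) (nuT f φ E t))

/-- `μ` is obtained from the standard construction at scale `ρ₁` over the collection `C`:
it is a weak* limit of the measures `μ_{t_k}` built from near-maximizing
`(t,ρ₁)`-separated sets. -/
def IsStdMeasure [MeasurableSpace X] (f : ℝ → X → X) (φ : X → ℝ) (C : Set (X × ℝ))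
    (ρ₁ : ℝ) (μ : Measure X) : Prop :=
  ∃ E : ℝ → Finset X,
    (∀ t > 0, IsSepSet f C t ρ₁ (E t) ∧
      partFn f φ C ρ₁ 0 t - 1 ≤ ∑ x ∈ E t, Real.exp (birk f φ x t)) ∧
    ∃ tk : ℕ → ℝ, (∀ n, 0 < tk n) ∧ Filter.Tendsto tk Filter.atTop Filter.atTop ∧
      ∀ gc : C(X, ℝ), Filter.Tendsto
        (fun n => ∫ x, gc x ∂(muT f φ (E (tk n)) (tk n))) Filter.atTop
        (𝓝 (∫ x, gc x ∂μ))

lemma exists_invariant_sep [MeasurableSpace X] [BorelSpace X]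
    {f : ℝ → X → X} (hf : IsFlow f)
    {ν₁ ν₂ : Measure X} (hp₁ : IsProbabilityMeasure ν₁) (hp₂ : IsProbabilityMeasure ν₂)
    (hinv₁ : ∀ t : ℝ, Measure.map (f t) ν₁ = ν₁) (hinv₂ : ∀ t : ℝ, Measure.map (f t) ν₂ = ν₂)
    (hsing : ν₁ ⟂ₘ ν₂) :
    ∃ A : Set X, MeasurableSet A ∧ ν₁ A = 1 ∧ ν₂ A = 0 ∧ ∀ r x, x ∈ A → f r x ∈ A := by
  haveI := hp₁; haveI := hp₂
  obtain ⟨s, hs, hs1, hs2⟩ := hsing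
  set A₀ : Set X := sᶜ with hA₀def
  have hA₀ : MeasurableSet A₀ := hs.compl
  have hν₁A₀c : ν₁ A₀ᶜ = 0 := by simpa [hA₀def] using hs1
  have hν₂A₀ : ν₂ A₀ = 0 := hs2
  have hcontt : ∀ t : ℝ, Continuous (f t) := fun t =>
    hf.1.comp (continuous_const.prodMk continuous_id)
  have hmeasf : ∀ t : ℝ, Measurable (f t) := fun t => (hcontt t).measurable
  set g : X → ℝ := A₀.indicator fun _ => (1:ℝ) with hgdef
  have hgmeas : Measurable g := measurable_const.indicator hA₀
  have hgbound : ∀ y, ‖g y‖ ≤ 1 := by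
    intro y; by_cases h : y ∈ A₀ <;> simp [hgdef, h]
  have hFcont : Continuous fun p : X × ℝ => f p.2 p.1 :=
    hf.1.comp (continuous_snd.prodMk continuous_fst)
  have hFmeas : Measurable fun p : X × ℝ => f p.2 p.1 := hFcont.measurable
  have hsx : ∀ x : X, Measurable fun s : ℝ => f s x := fun x =>
    (hf.1.comp (continuous_id.prodMk continuous_const)).measurable
  have hii : ∀ (x : X) (a b : ℝ), IntervalIntegrable (fun s => g (f s x)) volume a b := by
    intro x a b
    rw [intervalIntegrable_iff]
    have hc : IntegrableOn (fun _ : ℝ => (1:ℝ)) (Set.uIoc a b) volume :=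
      integrableOn_const measure_Ioc_lt_top.ne
    refine hc.mono' ((hgmeas.comp (hsx x)).aestronglyMeasurable) ?_
    filter_upwards with u; exact hgbound _
  set φ : ℕ → X → ℝ := fun n x => (∫ u in (0:ℝ)..(n:ℝ), g (f u x)) / n with hφdef
  have hφmeas : ∀ n : ℕ, Measurable (φ n) := by
    intro n
    have h2 : StronglyMeasurable fun p : X × ℝ => g (f p.2 p.1) :=
      (hgmeas.comp hFmeas).stronglyMeasurable
    have h1 : φ n = fun x => (∫ u, (fun p : X × ℝ => g (f p.2 p.1)) (x, u)
        ∂(volume.restrict (Set.Ioc (0:ℝ) (n:ℝ)))) / (n:ℝ) := by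
      funext x
      show (∫ u in (0:ℝ)..(n:ℝ), g (f u x)) / (n:ℝ) = _
      rw [intervalIntegral.integral_of_le (by positivity)]
    rw [h1]
    exact (h2.integral_prod_right' (ν := volume.restrict (Set.Ioc (0:ℝ) (n:ℝ)))).measurable.div_const _
  -- shift estimate
  have hshift : ∀ (n : ℕ) (r : ℝ) (x : X), 1 ≤ n → |φ n (f r x) - φ n x| ≤ 2 * |r| / n := by
    intro n r x hn
    have hnpos : (0:ℝ) < n := by exact_mod_cast hn
    have h1 : (∫ u in (0:ℝ)..(n:ℝ), g (f u (f r x))) = ∫ u in (0:ℝ)..(n:ℝ), g (f (u + r) x) := by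
      refine intervalIntegral.integral_congr fun u _ => ?_
      rw [← hf.2.2]
    have h2 : (∫ u in (0:ℝ)..(n:ℝ), g (f (u + r) x)) = ∫ u in (0+r)..((n:ℝ)+r), g (f u x) :=
      intervalIntegral.integral_comp_add_right (a := 0) (b := (n:ℝ)) (fun u => g (f u x)) r
    have h3 : (∫ u in (r:ℝ)..((n:ℝ)+r), g (f u x))
        = (∫ u in (r:ℝ)..(0:ℝ), g (f u x)) + ((∫ u in (0:ℝ)..(n:ℝ), g (f u x))
            + (∫ u in (n:ℝ)..((n:ℝ)+r), g (f u x))) := by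
      rw [intervalIntegral.integral_add_adjacent_intervals (hii x 0 n) (hii x n (n+r)),
        intervalIntegral.integral_add_adjacent_intervals (hii x r 0) (hii x 0 (n+r))]
    have hb1 : |∫ u in (r:ℝ)..(0:ℝ), g (f u x)| ≤ |r| := by
      have := intervalIntegral.norm_integral_le_of_norm_le_const
        (f := fun u => g (f u x)) (a := r) (b := 0) (C := 1) (fun u _ => hgbound _)
      simpa using this
    have hb2 : |∫ u in (n:ℝ)..((n:ℝ)+r), g (f u x)| ≤ |r| := by
      have := intervalIntegral.norm_integral_le_of_norm_le_const
        (f := fun u => g (f u x)) (a := n) (b := n+r) (C := 1) (fun u _ => hgbound _)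
      simpa using this
    have key : φ n (f r x) - φ n x
        = ((∫ u in (r:ℝ)..(0:ℝ), g (f u x)) + (∫ u in (n:ℝ)..((n:ℝ)+r), g (f u x))) / n := by
      rw [hφdef]
      simp only
      rw [h1, h2]
      rw [zero_add] at *
      rw [h3]
      ring
    rw [key, abs_div, abs_of_pos hnpos]
    have h4 : |(∫ u in (r:ℝ)..(0:ℝ), g (f u x)) + ∫ u in (n:ℝ)..((n:ℝ)+r), g (f u x)|
        ≤ 2 * |r| := (abs_add_le _ _).trans (by linarith)
    gcongr
  -- the invariant set
  set A : Set X := {x | ∀ j k : ℕ, ∃ n : ℕ, max k 1 ≤ n ∧ 1 - 1/((j:ℝ)+1) < φ n x} with hAdef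
  have hAmeas : MeasurableSet A := by
    have : A = ⋂ (j : ℕ), ⋂ (k : ℕ), ⋃ (n : ℕ), ⋃ (_ : max k 1 ≤ n),
        {x | 1 - 1/((j:ℝ)+1) < φ n x} := by
      ext x
      simp [hAdef]
    rw [this]
    exact MeasurableSet.iInter fun j => MeasurableSet.iInter fun k =>
      MeasurableSet.iUnion fun n => MeasurableSet.iUnion fun _ =>
        measurableSet_lt measurable_const (hφmeas n)
  have hAinv : ∀ (r : ℝ) (x : X), x ∈ A → f r x ∈ A := by
    intro r x hx j k
    obtain ⟨m, hm⟩ := exists_nat_ge (4 * |r| * ((j:ℝ)+1))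
    obtain ⟨n, hn1, hn2⟩ := hx (2*j+1) (max k (m+1))
    have hn1' : max k 1 ≤ n := le_trans (max_le_max (le_max_left k (m+1)) le_rfl) hn1
    have hnm : (m:ℝ) + 1 ≤ n := by
      have : m + 1 ≤ n := le_trans (le_trans (le_max_right k (m+1)) (le_max_left _ 1)) hn1
      exact_mod_cast this
    have hone : 1 ≤ n := le_trans (le_max_right k 1) hn1'
    have hnpos : (0:ℝ) < n := by exact_mod_cast hone
    refine ⟨n, hn1', ?_⟩
    have hsh := hshift n r x hone
    have h5 : φ n (f r x) ≥ φ n x - 2 * |r| / n := by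
      have := abs_le.1 hsh
      linarith [this.1]
    have hjj : (0:ℝ) < (j:ℝ) + 1 := by positivity
    have hr4 : 2 * |r| / (n:ℝ) ≤ 1 / (2*((j:ℝ)+1)) := by
      rw [div_le_div_iff₀ hnpos (by positivity)]
      nlinarith [abs_nonneg r, hm, hnm]
    have hcast : 1 - 1/(((2*j+1 : ℕ):ℝ)+1) = 1 - 1/(2*((j:ℝ)+1)) := by
      push_cast; ring_nf
    rw [hcast] at hn2
    have hjne : ((j:ℝ)+1) ≠ 0 := by positivity
    have hsum : 1/(2*((j:ℝ)+1)) + 1/(2*((j:ℝ)+1)) = 1/((j:ℝ)+1) := by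
      rw [← add_div, div_eq_div_iff (by positivity) hjne]
      ring
    linarith
  -- a.e. statements
  have key : ∀ (ν : Measure X), IsProbabilityMeasure ν → (∀ t : ℝ, Measure.map (f t) ν = ν) →
      ∀ (B : Set X), MeasurableSet B → ν B = 0 →
      ∀ᵐ x ∂ν, ∀ n : ℕ, 1 ≤ n →
        (∫ u in (0:ℝ)..(n:ℝ), (B.indicator fun _ => (1:ℝ)) (f u x)) = 0 := by
    intro ν hνp hνinv B hB hB0
    haveI := hνp
    set C : Set (X × ℝ) := (fun p : X × ℝ => f p.2 p.1) ⁻¹' B with hCdef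
    have hC : MeasurableSet C := hFmeas hB
    have hprod : (ν.prod (volume.restrict (Set.Ici (0:ℝ)))) C = 0 := by
      rw [Measure.prod_apply_symm hC]
      have : ∀ u : ℝ, ν ((fun x => (x, u)) ⁻¹' C) = 0 := by
        intro u
        have : ((fun x : X => (x, u)) ⁻¹' C) = f u ⁻¹' B := rfl
        rw [this, ← Measure.map_apply (hmeasf u) hB, hνinv u, hB0]
      simp only [this]
      simp
    have hae := (Measure.measure_prod_null hC).1 hprod
    filter_upwards [hae] with x hx n hn
    -- hx : (volume.restrict (Ici 0)) (Prod.mk x ⁻¹' C) = 0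
    have hsec : (Prod.mk x ⁻¹' C) = {u : ℝ | f u x ∈ B} := rfl
    have hxmeas : MeasurableSet {u : ℝ | f u x ∈ B} := (hsx x) hB
    have hvol : volume ({u : ℝ | f u x ∈ B} ∩ Set.Ici (0:ℝ)) = 0 := by
      have := hx
      simp only [Pi.zero_apply] at this
      rw [hsec, Measure.restrict_apply hxmeas] at this
      exact this
    have hcong : ∀ᵐ u ∂volume, u ∈ Set.uIoc (0:ℝ) (n:ℝ) →
        (B.indicator fun _ => (1:ℝ)) (f u x) = (fun _ => (0:ℝ)) u := by
      have hnot : ∀ᵐ u ∂volume, u ∉ ({u : ℝ | f u x ∈ B} ∩ Set.Ici (0:ℝ)) :=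
        (ae_iff.2 (by simpa only [not_not, Set.setOf_mem_eq] using hvol))
      filter_upwards [hnot] with u hu hmem
      have h0n : Set.uIoc (0:ℝ) (n:ℝ) = Set.Ioc (0:ℝ) (n:ℝ) := Set.uIoc_of_le (by positivity)
      rw [h0n] at hmem
      have : f u x ∉ B := fun hfb => hu ⟨hfb, le_of_lt hmem.1⟩
      simp [Set.indicator_of_notMem this]
    calc (∫ u in (0:ℝ)..(n:ℝ), (B.indicator fun _ => (1:ℝ)) (f u x))
        = ∫ u in (0:ℝ)..(n:ℝ), (0:ℝ) := intervalIntegral.integral_congr_ae hcong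
      _ = 0 := by simp
  -- ν₂ A = 0
  have hν₂A : ν₂ A = 0 := by
    have h0 := key ν₂ hp₂ hinv₂ A₀ hA₀ hν₂A₀
    have : ∀ᵐ x ∂ν₂, x ∉ A := by
      filter_upwards [h0] with x hx hxA
      obtain ⟨n, hn1, hn2⟩ := hxA 0 0
      have hone : 1 ≤ n := le_trans (le_max_right 0 1) hn1
      have : φ n x = 0 := by
        rw [hφdef]; simp only
        rw [hx n hone]
        simp
      rw [this] at hn2
      norm_num at hn2
    have := ae_iff.1 this
    simpa [not_not] using this
  -- ν₁ A = 1
  have hν₁A : ν₁ A = 1 := by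
    have h0 := key ν₁ hp₁ hinv₁ A₀ᶜ hA₀.compl hν₁A₀c
    have hmemae : ∀ᵐ x ∂ν₁, x ∈ A := by
      filter_upwards [h0] with x hx j k
      refine ⟨max k 1, le_rfl, ?_⟩
      have hone : 1 ≤ max k 1 := le_max_right k 1
      have hφ1 : φ (max k 1) x = 1 := by
        have hint := hx (max k 1) hone
        have hsplit : ∀ u : ℝ, (A₀.indicator fun _ => (1:ℝ)) (f u x)
            = 1 - (A₀ᶜ.indicator fun _ => (1:ℝ)) (f u x) := by
          intro u
          by_cases h : f u x ∈ A₀ <;> simp [h]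
        have : (∫ u in (0:ℝ)..((max k 1 : ℕ):ℝ), g (f u x))
            = ∫ u in (0:ℝ)..((max k 1 : ℕ):ℝ),
                ((1:ℝ) - (A₀ᶜ.indicator fun _ => (1:ℝ)) (f u x)) := by
          rw [hgdef]
          exact intervalIntegral.integral_congr fun u _ => hsplit u
        rw [hφdef]; simp only
        rw [this]
        have hiic : IntervalIntegrable (fun u : ℝ => (A₀ᶜ.indicator fun _ => (1:ℝ)) (f u x))
            volume 0 ((max k 1 : ℕ):ℝ) := by
          rw [intervalIntegrable_iff]
          have hc : IntegrableOn (fun _ : ℝ => (1:ℝ)) (Set.uIoc 0 ((max k 1 : ℕ):ℝ)) volume :=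
            integrableOn_const measure_Ioc_lt_top.ne
          refine hc.mono' (((measurable_const.indicator hA₀.compl).comp (hsx x)).aestronglyMeasurable) ?_
          filter_upwards with u
          by_cases h : f u x ∈ A₀ᶜ <;> simp [h]
        rw [intervalIntegral.integral_sub intervalIntegrable_const hiic, hint]
        have hpos : (0:ℝ) < ((max k 1 : ℕ):ℝ) := by exact_mod_cast hone
        rw [sub_zero, intervalIntegral.integral_const, smul_eq_mul, mul_one, sub_zero,
          div_self hpos.ne']
      rw [hφ1]
      have : 0 < 1/((j:ℝ)+1) := by positivity
      linarith
    have hcompl : ν₁ Aᶜ = 0 := by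
      have := ae_iff.1 hmemae
      simpa [Set.compl_def] using this
    have := measure_compl hAmeas (measure_ne_top ν₁ A)
    rw [hcompl] at this
    simp only [measure_univ] at this
    -- this : 0 = 1 - ν₁ A
    have hle : ν₁ A ≤ 1 := prob_le_one
    exact le_antisymm hle (by
      by_contra h
      push_neg at h
      exact (tsub_pos_of_lt h).ne' this.symm)
  exact ⟨A, hAmeas, hν₁A, hν₂A, hAinv⟩

/-- Lemma 5.2: separating compact sets for two mutually singular almost expansive
measures. -/
theorem stmt17 [CompactSpace X] [MeasurableSpace X] [BorelSpace X]
    (f : ℝ → X → X) (hf : IsFlow f)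
    (Λ : Set X) (hΛcomp : IsCompact Λ) (hΛinv : ∀ t : ℝ, f t '' Λ = Λ)
    (ε ε₁ : ℝ) (hε : 0 < ε) (hε₁ : 0 < ε₁) (hε₁ε : ε₁ < ε)
    (ν₁ ν₂ : Measure X) (hp₁ : IsProbabilityMeasure ν₁) (hp₂ : IsProbabilityMeasure ν₂)
    (hinv₁ : ∀ t : ℝ, Measure.map (f t) ν₁ = ν₁)
    (hinv₂ : ∀ t : ℝ, Measure.map (f t) ν₂ = ν₂)
    (hν₁Λ : ν₁ Λ = 1) (hν₂Λ : ν₂ Λ = 1)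
    (hexp₁ : ν₁ (NE f ε Λ) = 0) (hexp₂ : ν₂ (NE f ε Λ) = 0)
    (hsing : ν₁ ⟂ₘ ν₂)
    (β : ℝ) (hβ : 0 < β) (M : ℝ) (hM : 0 < M) :
    ∃ T₃ : ℝ, ∃ Q : ℝ → Set X,
      (∀ t : ℝ, T₃ ≤ t → IsCompact (Q t) ∧ Q t ⊆ Λ ∧
        ENNReal.ofReal (1 - β) ≤ ν₁ (Q t) ∧ ν₂ (Q t) = 0) ∧
      ∀ i j : ℕ, (i : ℝ) ≤ M → (j : ℝ) ≤ M →
        Filter.limsup (fun t : ℝ =>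
            ν₂ (⋃ y ∈ Q t, f (-(i : ℝ)) ''
              bowenBall f (t - ((i : ℝ) + (j : ℝ))) ε₁ (f (i : ℝ) y)))
          Filter.atTop ≤ ENNReal.ofReal β := by
  haveI := hp₁; haveI := hp₂
  obtain ⟨A, hAm, hA1, hA0, hAinv⟩ := exists_invariant_sep hf hp₁ hp₂ hinv₁ hinv₂ hsing
  have hΛm : MeasurableSet Λ := hΛcomp.isClosed.measurableSet
  have hcont : ∀ t : ℝ, Continuous (f t) := fun t =>
    hf.1.comp (continuous_const.prodMk continuous_id)
  have hmeasf : ∀ t : ℝ, Measurable (f t) := fun t => (hcont t).measurable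
  have hadd : ∀ (a b : ℝ) (x : X), f a (f b x) = f (a + b) x := fun a b x => (hf.2.2 a b x).symm
  have hν₁Λc : ν₁ Λᶜ = 0 := by
    rw [measure_compl hΛm (measure_ne_top _ _), hν₁Λ, measure_univ, tsub_self]
  have hν₂Λc : ν₂ Λᶜ = 0 := by
    rw [measure_compl hΛm (measure_ne_top _ _), hν₂Λ, measure_univ, tsub_self]
  -- choose the compact set K
  have hAΛ1 : ν₁ (A ∩ Λ) = 1 := by
    have h1 : ν₁ ((A ∩ Λ)ᶜ) = 0 := by
      rw [Set.compl_inter]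
      refine le_antisymm (le_trans (measure_union_le _ _) ?_) zero_le
      rw [hν₁Λc]
      have : ν₁ Aᶜ = 0 := by
        rw [measure_compl hAm (measure_ne_top _ _), hA1, measure_univ, tsub_self]
      rw [this]; simp
    have := measure_compl (hAm.inter hΛm) (measure_ne_top ν₁ _)
    rw [h1, measure_univ] at this
    have hle : ν₁ (A ∩ Λ) ≤ 1 := prob_le_one
    by_contra h
    have hlt : ν₁ (A ∩ Λ) < 1 := lt_of_le_of_ne hle h
    exact (tsub_pos_of_lt hlt).ne' this.symm
  obtain ⟨K, hKsub, hKclosed, hKlt⟩ :=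
    (hAm.inter hΛm).exists_isClosed_lt_add (μ := ν₁) (by simp)
      (ε := ENNReal.ofReal β) (by simp only [ne_eq, ENNReal.ofReal_eq_zero, not_le]; linarith)
  have hKcomp : IsCompact K := hKclosed.isCompact
  have hKm : MeasurableSet K := hKclosed.measurableSet
  have hKA : K ⊆ A := fun x hx => (hKsub hx).1
  have hν₁K : ENNReal.ofReal (1 - β) ≤ ν₁ K := by
    rcases le_or_gt β 1 with hβ1 | hβ1
    · have h1 : (1:ENNReal) ≤ ν₁ K + ENNReal.ofReal β := by
        rw [← hAΛ1]; exact le_of_lt hKlt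
      have h2 : ENNReal.ofReal (1-β) = 1 - ENNReal.ofReal β := by
        rw [ENNReal.ofReal_sub _ (le_of_lt hβ), ENNReal.ofReal_one]
      rw [h2]
      exact tsub_le_iff_right.2 h1
    · have : ENNReal.ofReal (1-β) = 0 := by
        rw [ENNReal.ofReal_eq_zero]; linarith
      rw [this]; exact zero_le
  set Q : ℝ → Set X := fun t => Λ ∩ f (t/2) ⁻¹' K with hQdef
  refine ⟨0, Q, ?_, ?_⟩
  · intro t _
    refine ⟨(hΛcomp.isClosed.inter (hKclosed.preimage (hcont _))).isCompact,
      Set.inter_subset_left, ?_, ?_⟩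
    · have hpre : ν₁ (f (t/2) ⁻¹' K) = ν₁ K := by
        rw [← Measure.map_apply (hmeasf _) hKm, hinv₁]
      have hle2 : ν₁ (f (t/2) ⁻¹' K) ≤ ν₁ (Q t) := by
        have h3 := measure_le_inter_add_diff ν₁ (f (t/2) ⁻¹' K) Λ
        have h4 : ν₁ (f (t/2) ⁻¹' K \ Λ) = 0 :=
          measure_mono_null (Set.diff_subset_compl _ _) hν₁Λc
        rw [h4, add_zero] at h3
        calc ν₁ (f (t/2) ⁻¹' K) ≤ ν₁ (f (t/2) ⁻¹' K ∩ Λ) := h3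
          _ = ν₁ (Q t) := by rw [hQdef]; simp only [Set.inter_comm]
      exact le_trans hν₁K (le_trans (le_of_eq hpre.symm) hle2)
    · refine measure_mono_null ?_ hA0
      intro x hx
      have hxK : f (t/2) x ∈ K := hx.2
      have : f (-(t/2)) (f (t/2) x) ∈ A := hAinv _ _ (hKA hxK)
      rwa [hadd, neg_add_cancel, hf.2.1] at this
  · intro i j _ _
    -- the shadowing sets W n
    set W : ℕ → Set X := fun n =>
      {w | ∃ v ∈ K, ∀ r ∈ Icc (-(n:ℝ)) (n:ℝ), dist (f r v) (f r w) ≤ ε₁} with hWdef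
    have hWcomp : ∀ n : ℕ, IsCompact (W n) := by
      intro n
      have hS : IsClosed {p : X × X | ∀ r ∈ Icc (-(n:ℝ)) (n:ℝ),
          dist (f r p.1) (f r p.2) ≤ ε₁} := by
        have hSeq : {p : X × X | ∀ r ∈ Icc (-(n:ℝ)) (n:ℝ), dist (f r p.1) (f r p.2) ≤ ε₁}
            = ⋂ r ∈ Icc (-(n:ℝ)) (n:ℝ), {p : X × X | dist (f r p.1) (f r p.2) ≤ ε₁} := by
          ext p; simp
        rw [hSeq]
        refine isClosed_biInter fun r _ => isClosed_le ?_ continuous_const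
        exact Continuous.dist ((hcont r).comp continuous_fst) ((hcont r).comp continuous_snd)
      have himg : W n = Prod.snd '' ((K ×ˢ (Set.univ : Set X)) ∩
          {p : X × X | ∀ r ∈ Icc (-(n:ℝ)) (n:ℝ), dist (f r p.1) (f r p.2) ≤ ε₁}) := by
        ext w
        constructor
        · rintro ⟨v, hv, hd⟩
          exact ⟨(v, w), ⟨⟨hv, Set.mem_univ _⟩, hd⟩, rfl⟩
        · rintro ⟨⟨v, w'⟩, ⟨⟨hv, -⟩, hd⟩, rfl⟩
          exact ⟨v, hv, hd⟩
      rw [himg]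
      exact (((hKcomp.prod isCompact_univ).inter_right hS).image continuous_snd)
    have hWm : ∀ n, MeasurableSet (W n) := fun n => (hWcomp n).isClosed.measurableSet
    have hWanti : Antitone W := by
      intro m n hmn w hw
      obtain ⟨v, hv, hd⟩ := hw
      exact ⟨v, hv, fun r hr => hd r ⟨le_trans (neg_le_neg (by exact_mod_cast hmn)) hr.1,
        le_trans hr.2 (by exact_mod_cast hmn)⟩⟩
    -- the intersection is null
    have hWnull : ν₂ (⋂ n, W n) = 0 := by
      have hsub : (⋂ n, W n) ⊆ Λᶜ ∪ (NE f ε Λ ∪ A) := by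
        intro w hw
        by_cases hwΛ : w ∈ Λ
        swap
        · exact Or.inl hwΛ
        by_cases hwNE : w ∈ NE f ε Λ
        · exact Or.inr (Or.inl hwNE)
        right; right
        have hv : ∀ n : ℕ, ∃ v ∈ K, ∀ r ∈ Icc (-(n:ℝ)) (n:ℝ), dist (f r v) (f r w) ≤ ε₁ :=
          fun n => Set.mem_iInter.1 hw n
        choose v hvK hvd using hv
        obtain ⟨u, huK, ψ, hψ, hψt⟩ := hKcomp.tendsto_subseq hvK
        have hu : ∀ r : ℝ, dist (f r u) (f r w) ≤ ε₁ := by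
          intro r
          have htd : Tendsto (fun m : ℕ => dist (f r (v (ψ m))) (f r w)) atTop
              (𝓝 (dist (f r u) (f r w))) :=
            (Tendsto.dist (((hcont r).tendsto u).comp hψt) tendsto_const_nhds)
          refine le_of_tendsto htd ?_
          filter_upwards [eventually_ge_atTop ⌈|r|⌉₊] with m hm
          refine hvd (ψ m) r ⟨?_, ?_⟩
          · have h1 : |r| ≤ (ψ m : ℝ) := by
              calc |r| ≤ (⌈|r|⌉₊:ℝ) := Nat.le_ceil _
                _ ≤ (m:ℝ) := by exact_mod_cast hm
                _ ≤ (ψ m : ℝ) := by exact_mod_cast hψ.le_apply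
            linarith [neg_abs_le r]
          · have h1 : |r| ≤ (ψ m : ℝ) := by
              calc |r| ≤ (⌈|r|⌉₊:ℝ) := Nat.le_ceil _
                _ ≤ (m:ℝ) := by exact_mod_cast hm
                _ ≤ (ψ m : ℝ) := by exact_mod_cast hψ.le_apply
            linarith [le_abs_self r]
        have huΓ : u ∈ GammaSet f ε w := by
          intro r
          rw [dist_comm]
          exact le_trans (hu r) (le_of_lt hε₁ε)
        obtain ⟨s₀, hs₀pos, hsub'⟩ : ∃ s > 0, GammaSet f ε w ⊆ (fun r : ℝ => f r w) '' Icc (-s) s := by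
          by_contra hcon
          refine hwNE ⟨hwΛ, fun s hs hsubs => ?_⟩
          exact hcon ⟨s, hs, hsubs⟩
        obtain ⟨r₀, -, hr₀⟩ := hsub' huΓ
        have hwu : w = f (-r₀) u := by
          have h5 : f r₀ w = u := hr₀
          have h6 : f (-r₀) (f r₀ w) = w := by rw [hadd, neg_add_cancel, hf.2.1]
          rw [← h5]
          exact h6.symm
        rw [hwu]
        exact hAinv _ _ (hKA huK)
      refine measure_mono_null hsub ?_
      refine le_antisymm (le_trans (measure_union_le _ _) ?_) zero_le
      rw [hν₂Λc, zero_add]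
      exact le_trans (measure_union_le _ _) (by rw [hexp₂, hA0, add_zero])
    -- eventual bound of the tube measure
    have hBddA : ∀ (T : ℝ) (x y : X),
        BddAbove (Set.range fun s : Icc (0:ℝ) T => dist (f (s:ℝ) x) (f (s:ℝ) y)) := by
      intro T x y
      obtain ⟨C, hC⟩ := Metric.isBounded_iff.1 (isCompact_univ : IsCompact (Set.univ : Set X)).isBounded
      exact ⟨C, by rintro d ⟨s, rfl⟩; exact hC (Set.mem_univ _) (Set.mem_univ _)⟩
    have hbound : ∀ n : ℕ, ∀ᶠ t in (atTop : Filter ℝ),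
        ν₂ (⋃ y ∈ Q t, f (-(i : ℝ)) ''
          bowenBall f (t - ((i : ℝ) + (j : ℝ))) ε₁ (f (i : ℝ) y)) ≤ ν₂ (W n) := by
      intro n
      filter_upwards [eventually_ge_atTop (2*((n:ℝ) + (i:ℝ) + (j:ℝ)))] with t ht
      have hsubt : (⋃ y ∈ Q t, f (-(i : ℝ)) ''
          bowenBall f (t - ((i : ℝ) + (j : ℝ))) ε₁ (f (i : ℝ) y)) ⊆ f (t/2) ⁻¹' (W n) := by
        intro z hz
        simp only [Set.mem_iUnion] at hz
        obtain ⟨y, hy, hzmem⟩ := hz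
        obtain ⟨z', hz', rfl⟩ := hzmem
        have hyK : f (t/2) y ∈ K := hy.2
        have hdist : ∀ s, s ∈ Icc (0:ℝ) (t - ((i:ℝ)+(j:ℝ))) →
            dist (f s (f (i:ℝ) y)) (f s z') < ε₁ := by
          intro s hs
          exact lt_of_le_of_lt (le_ciSup (hBddA _ _ _) (⟨s, hs⟩ : Icc (0:ℝ) (t - ((i:ℝ)+(j:ℝ))))) hz'
        refine ⟨f (t/2) y, hyK, ?_⟩
        intro r hr
        have hi0 : (0:ℝ) ≤ (i:ℝ) := Nat.cast_nonneg i
        have hj0 : (0:ℝ) ≤ (j:ℝ) := Nat.cast_nonneg j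
        have hn0 : (0:ℝ) ≤ (n:ℝ) := Nat.cast_nonneg n
        have hs : r + t/2 - (i:ℝ) ∈ Icc (0:ℝ) (t - ((i:ℝ)+(j:ℝ))) := by
          constructor
          · have := hr.1; linarith
          · have := hr.2; linarith
        have hd := hdist _ hs
        rw [hadd] at hd
        have e1 : r + t/2 - (i:ℝ) + (i:ℝ) = r + t/2 := by ring
        rw [e1] at hd
        calc dist (f r (f (t/2) y)) (f r (f (t/2) (f (-(i:ℝ)) z')))
            = dist (f (r + t/2) y) (f (r + t/2 - (i:ℝ)) z') := by
              rw [hadd, hadd, hadd]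
              ring_nf
          _ ≤ ε₁ := le_of_lt hd
      calc ν₂ (⋃ y ∈ Q t, f (-(i : ℝ)) ''
            bowenBall f (t - ((i : ℝ) + (j : ℝ))) ε₁ (f (i : ℝ) y))
          ≤ ν₂ (f (t/2) ⁻¹' (W n)) := measure_mono hsubt
        _ = ν₂ (W n) := by rw [← Measure.map_apply (hmeasf _) (hWm n), hinv₂]
    -- conclude
    have hlimsup_le : ∀ n : ℕ, Filter.limsup (fun t : ℝ =>
        ν₂ (⋃ y ∈ Q t, f (-(i : ℝ)) ''
          bowenBall f (t - ((i : ℝ) + (j : ℝ))) ε₁ (f (i : ℝ) y))) Filter.atTop ≤ ν₂ (W n) :=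
      fun n => limsup_le_of_le (by isBoundedDefault) (hbound n)
    have htend : Tendsto (fun n => ν₂ (W n)) atTop (𝓝 (ν₂ (⋂ n, W n))) := by
      have := tendsto_measure_iInter_atTop (μ := ν₂) (s := W)
        (fun n => (hWm n).nullMeasurableSet) hWanti ⟨0, measure_ne_top _ _⟩
      exact this
    rw [hWnull] at htend
    have hinf : Tendsto (fun n => ν₂ (W n)) atTop (𝓝 (⨅ n, ν₂ (W n))) :=
      tendsto_atTop_iInf (fun m n hmn => measure_mono (hWanti hmn))
    have hiszero : (⨅ n, ν₂ (W n)) = 0 := tendsto_nhds_unique hinf htend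
    refine le_trans (le_trans (le_iInf hlimsup_le) (le_of_eq hiszero)) zero_le

end CTFlow
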